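/- Let a > 0, let (E_i)_{i≥1} be an i.i.d. sequence of exponential random variables with rate a on a probability space, and set T_0 = 0 and T_k = E_1 + ⋯ + E_k for k ≥ 1. Let F : ℝ → ℝ be nondecreasing with 0 ≤ F(x) ≤ 1 for all x and ∫_0^∞ (1 − F(y)) dy < ∞, and let t > 0 satisfy F(t) > 0. Then the infinite product ∏_{i=0}^∞ F(t + T_i) converges almost surely to a random variable taking values in (0,1], and E[∏_{i=0}^∞ F(t + T_i)] > 0. -/

import Mathlib

open MeasureTheory ProbabilityTheory Real

lemma aux_summable_tail {F : ℝ → ℝ} (hmono : Monotone F) (hF1 : ∀ x, F x ≤ 1)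
    (hint : IntegrableOn (fun y => 1 - F y) (Set.Ici (0 : ℝ)))
    {t c : ℝ} (ht : 0 < t) (hc : 0 < c) :
    Summable (fun i : ℕ => 1 - F (t + c * i)) := by
  set I : ℝ := ∫ y in Set.Ici t, (1 - F y)
  have hInt_t : IntegrableOn (fun y => 1 - F y) (Set.Ici t) :=
    hint.mono_set (Set.Ici_subset_Ici.2 ht.le)
  have hI0 : 0 ≤ I := setIntegral_nonneg measurableSet_Ici (fun y _ => by linarith [hF1 y])
  have key : ∀ m : ℕ, ∑ i ∈ Finset.range m, (1 - F (t + c * (i + 1))) ≤ I / c := by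
    intro m
    rw [le_div_iff₀ hc]
    have h1 : ∀ i : ℕ, (1 - F (t + c * (i + 1))) * c ≤
        ∫ y in Set.Ioc (t + c * i) (t + c * (i + 1)), (1 - F y) := by
      intro i
      have hsub : Set.Ioc (t + c * i) (t + c * (i + 1)) ⊆ Set.Ici (0:ℝ) := by
        intro y hy
        have : t + c * i < y := hy.1
        have : (0:ℝ) ≤ c * i := by positivity
        simp only [Set.mem_Ici]; linarith
      have := setIntegral_ge_of_const_le (c := 1 - F (t + c * (i + 1)))
        (measurableSet_Ioc) (by simp [Real.volume_Ioc])
        (fun y hy => by have := hmono hy.2; linarith)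
        (hint.mono_set hsub)
      rw [measureReal_def, Real.volume_Ioc, smul_eq_mul] at this
      have hcc : (ENNReal.ofReal (t + c * (i+1) - (t + c * i))).toReal = c := by
        rw [ENNReal.toReal_ofReal (by ring_nf; positivity)]
        ring
      rw [hcc] at this
      linarith
    calc (∑ i ∈ Finset.range m, (1 - F (t + c * (i + 1)))) * c
        = ∑ i ∈ Finset.range m, (1 - F (t + c * (i + 1))) * c := Finset.sum_mul ..
      _ ≤ ∑ i ∈ Finset.range m, ∫ y in Set.Ioc (t + c * i) (t + c * (i + 1)), (1 - F y) :=
          Finset.sum_le_sum (fun i _ => h1 i)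
      _ = ∫ y in ⋃ i ∈ Finset.range m, Set.Ioc (t + c * i) (t + c * (i + 1)), (1 - F y) := by
          rw [integral_biUnion_finset]
          · exact fun i _ => measurableSet_Ioc
          · intro i _ j _ hij
            rcases hij.lt_or_gt with h | h
            · refine Set.Ioc_disjoint_Ioc.2 ?_
              refine le_trans (min_le_left _ _) (le_trans ?_ (le_max_right _ _))
              have : (i:ℝ) + 1 ≤ (j:ℝ) := by exact_mod_cast h
              nlinarith
            · refine Set.Ioc_disjoint_Ioc.2 ?_
              refine le_trans (min_le_right _ _) (le_trans ?_ (le_max_left _ _))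
              have : (j:ℝ) + 1 ≤ (i:ℝ) := by exact_mod_cast h
              nlinarith
          · intro i _
            refine hint.mono_set ?_
            intro y hy
            have : t + c * i < y := hy.1
            have : (0:ℝ) ≤ c * i := by positivity
            simp only [Set.mem_Ici]; linarith
      _ ≤ I := by
          refine setIntegral_mono_set hInt_t ?_ ?_
          · exact Filter.Eventually.of_forall
              (fun y => by simp only [Pi.zero_apply]; linarith [hF1 y])
          · refine HasSubset.Subset.eventuallyLE ?_
            intro y hy
            simp only [Set.mem_iUnion] at hy
            obtain ⟨i, _, hy⟩ := hy
            have : t + c * i < y := hy.1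
            have : (0:ℝ) ≤ c * i := by positivity
            simp only [Set.mem_Ici]; linarith
  apply summable_of_sum_range_le (c := (1 - F t) + I / c)
  · intro n
    have h := hmono (le_add_of_nonneg_right (by positivity : (0:ℝ) ≤ c * n) : t ≤ t + c * n)
    linarith [hF1 (t + c * n)]
  · intro n
    cases n with
    | zero => simp; linarith [hF1 t, div_nonneg hI0 hc.le]
    | succ m =>
      rw [Finset.sum_range_succ']
      simp only [Nat.cast_zero, mul_zero, add_zero]
      have := key m
      have h2 : ∀ i ∈ Finset.range m, (1 - F (t + c * ((i:ℕ) + 1 : ℕ))) = (1 - F (t + c * ((i:ℝ) + 1))) := by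
        intro i _; push_cast; ring_nf
      rw [Finset.sum_congr rfl h2]
      have h3 : ∑ i ∈ Finset.range m, (1 - F (t + c * ((i:ℝ) + 1))) ≤ I / c := key m
      linarith

lemma aux_prod {x : ℕ → ℝ} {ε : ℝ} (hε : 0 < ε) (hb : ∀ i, ε ≤ x i) (hle : ∀ i, x i ≤ 1)
    (hsum : Summable (fun i => 1 - x i)) :
    Multipliable x ∧ 0 < ∏' i, x i ∧ (∏' i, x i) ≤ 1 := by
  have hpos : ∀ i, 0 < x i := fun i => lt_of_lt_of_le hε (hb i)
  have hlognp : ∀ i, Real.log (x i) ≤ 0 := fun i => Real.log_nonpos (hpos i).le (hle i)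
  have hlogsum : Summable (fun i => Real.log (x i)) := by
    rw [← summable_neg_iff]
    refine Summable.of_nonneg_of_le (f := fun i => ε⁻¹ * (1 - x i))
      (fun i => by simpa using neg_nonneg.2 (hlognp i)) ?_ (hsum.mul_left _)
    intro i
    have h1 : Real.log ((x i)⁻¹) ≤ (x i)⁻¹ - 1 :=
      Real.log_le_sub_one_of_pos (inv_pos.2 (hpos i))
    rw [Real.log_inv] at h1
    have h2 : (x i)⁻¹ - 1 = (1 - x i) / x i := by
      rw [eq_div_iff (hpos i).ne', sub_mul, inv_mul_cancel₀ (hpos i).ne']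
      ring
    have h2b : (1 - x i) / x i = (x i)⁻¹ * (1 - x i) := div_eq_inv_mul _ _
    have h3 : (1 - x i) / x i ≤ (1 - x i) / ε :=
      div_le_div_of_nonneg_left (by linarith [hle i]) hε (hb i)
    have h4 : (1 - x i) / ε = ε⁻¹ * (1 - x i) := div_eq_inv_mul _ _
    linarith
  have hprod : HasProd x (rexp (∑' i, Real.log (x i))) := by
    have := hlogsum.hasSum.rexp
    have heq : (rexp ∘ fun i => Real.log (x i)) = x := by
      funext i; simp [Real.exp_log (hpos i)]
    rwa [heq] at this
  refine ⟨hprod.multipliable, ?_, ?_⟩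
  · rw [hprod.tprod_eq]; exact Real.exp_pos _
  · rw [hprod.tprod_eq, Real.exp_le_one_iff]
    exact tsum_nonpos hlognp

/-- Let `(E_i)` be i.i.d. exponential(a) random variables, `T_k = E_1 + ⋯ + E_k` (`T_0 = 0`),
and `F` nondecreasing with values in `[0,1]` and integrable tail `∫_0^∞ (1 - F) < ∞`.
If `F t > 0` for some `t > 0`, then the infinite product `∏_{i=0}^∞ F(t + T_i)` converges
a.s. to a random variable in `(0,1]` and its expectation is strictly positive. -/
theorem infinite_product_cluster_lengths_positive
    {Ω : Type*} [MeasurableSpace Ω] (P : Measure Ω) [IsProbabilityMeasure P]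
    (a : ℝ) (ha : 0 < a) (E : ℕ → Ω → ℝ)
    (hmeas : ∀ i, Measurable (E i))
    (hindep : iIndepFun E P)
    (hdist : ∀ i, Measure.map (E i) P = expMeasure a)
    (F : ℝ → ℝ) (hmono : Monotone F) (hF0 : ∀ x, 0 ≤ F x) (hF1 : ∀ x, F x ≤ 1)
    (hint : IntegrableOn (fun y => 1 - F y) (Set.Ici (0 : ℝ)))
    (t : ℝ) (ht : 0 < t) (hFt : 0 < F t) :
    (∀ᵐ ω ∂P,
      Multipliable (fun i : ℕ => F (t + ∑ j ∈ Finset.range i, E j ω)) ∧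
      0 < ∏' i : ℕ, F (t + ∑ j ∈ Finset.range i, E j ω) ∧
      (∏' i : ℕ, F (t + ∑ j ∈ Finset.range i, E j ω)) ≤ 1) ∧
    0 < ∫ ω, (∏' i : ℕ, F (t + ∑ j ∈ Finset.range i, E j ω)) ∂P := by
  have hFmeas : Measurable F := hmono.measurable
  have hTmeas : ∀ i : ℕ, Measurable (fun ω => ∑ j ∈ Finset.range i, E j ω) :=
    fun i => Finset.measurable_sum _ (fun j _ => hmeas j)
  -- the exponential law gives no mass to `(-∞, 0]`
  have hIic : expMeasure a (Set.Iic 0) = 0 := by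
    rw [expMeasure, gammaMeasure, withDensity_apply _ measurableSet_Iic,
      setLIntegral_congr (MeasureTheory.Iio_ae_eq_Iic (a := (0:ℝ))).symm]
    exact lintegral_gammaPDF_of_nonpos le_rfl
  have hEpos : ∀ᵐ ω ∂P, ∀ i, 0 < E i ω := by
    rw [ae_all_iff]
    intro i
    have hset : {ω | ¬ 0 < E i ω} = E i ⁻¹' Set.Iic 0 := by
      ext ω; simp [not_lt]
    rw [ae_iff, hset, ← Measure.map_apply (hmeas i) measurableSet_Iic, hdist i]
    exact hIic
  -- truncated variables
  set u : ℝ → ℝ := fun x => min x 1 with hu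
  set Y : ℕ → Ω → ℝ := fun i ω => min (E i ω) 1 with hY
  have humeas : Measurable u := measurable_id.min measurable_const
  have hYmeas : ∀ i, Measurable (Y i) := fun i => (hmeas i).min measurable_const
  have hident : ∀ i, IdentDistrib (Y i) (Y 0) P P := by
    intro i
    have hEident : IdentDistrib (E i) (E 0) P P :=
      ⟨(hmeas i).aemeasurable, (hmeas 0).aemeasurable, by rw [hdist i, hdist 0]⟩
    exact hEident.comp humeas
  have hYindep : Pairwise (Function.onFun (IndepFun · · P) Y) :=
    fun i j hij => (hindep.indepFun hij).comp humeas humeas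
  have hYint : Integrable (Y 0) P := by
    refine Integrable.mono' (integrable_const (1:ℝ)) (hYmeas 0).aestronglyMeasurable ?_
    filter_upwards [hEpos] with ω hω
    have h0 : 0 < Y 0 ω := lt_min (hω 0) one_pos
    rw [Real.norm_eq_abs, abs_le]
    exact ⟨by linarith, min_le_right _ _⟩
  have hYpos : ∀ᵐ ω ∂P, 0 < Y 0 ω := by
    filter_upwards [hEpos] with ω hω; exact lt_min (hω 0) one_pos
  have hm : 0 < ∫ ω, Y 0 ω ∂P := by
    rw [integral_pos_iff_support_of_nonneg_ae (hYpos.mono fun ω h => h.le) hYint]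
    have hsub : ∀ᵐ ω ∂P, ω ∈ Function.support (Y 0) := hYpos.mono fun ω h => ne_of_gt h
    have hcnull : P (Function.support (Y 0))ᶜ = 0 := by
      have := ae_iff.1 hsub
      simpa [Set.compl_def] using this
    have hone : (1:ENNReal) ≤ P (Function.support (Y 0)) := by
      have hle := measure_union_le (μ := P) (Function.support (Y 0)) (Function.support (Y 0))ᶜ
      rwa [Set.union_compl_self, measure_univ, hcnull, add_zero] at hle
    exact lt_of_lt_of_le (by norm_num) hone
  have hslln := strong_law_ae_real Y hYint hYindep hident
  set m : ℝ := ∫ ω, Y 0 ω ∂P with hmdef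
  set c : ℝ := m / 2 with hcdef
  have hc : 0 < c := by positivity
  have hg : Summable (fun i : ℕ => 1 - F (t + c * i)) := aux_summable_tail hmono hF1 hint ht hc
  have hae : ∀ᵐ ω ∂P,
      Multipliable (fun i : ℕ => F (t + ∑ j ∈ Finset.range i, E j ω)) ∧
      0 < ∏' i : ℕ, F (t + ∑ j ∈ Finset.range i, E j ω) ∧
      (∏' i : ℕ, F (t + ∑ j ∈ Finset.range i, E j ω)) ≤ 1 := by
    filter_upwards [hEpos, hslln] with ω hpos hlim
    have hTnn : ∀ i : ℕ, 0 ≤ ∑ j ∈ Finset.range i, E j ω :=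
      fun i => Finset.sum_nonneg fun j _ => (hpos j).le
    have hxb : ∀ i : ℕ, F t ≤ F (t + ∑ j ∈ Finset.range i, E j ω) :=
      fun i => hmono (le_add_of_nonneg_right (hTnn i))
    have hev : ∀ᶠ n : ℕ in Filter.atTop, c ≤ (∑ i ∈ Finset.range n, Y i ω) / n :=
      hlim.eventually (eventually_ge_nhds (by rw [hcdef]; linarith))
    obtain ⟨N, hN⟩ := Filter.eventually_atTop.1 hev
    have hsummable : Summable (fun i : ℕ => 1 - F (t + ∑ j ∈ Finset.range i, E j ω)) := by
      set M := max N 1 with hM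
      have key : ∀ i : ℕ, M ≤ i → c * i ≤ ∑ j ∈ Finset.range i, E j ω := by
        intro i hi
        have h1 : 1 ≤ i := le_trans (le_max_right _ _) hi
        have h2 := hN i (le_trans (le_max_left _ _) hi)
        have hipos : (0:ℝ) < i := by exact_mod_cast h1
        rw [le_div_iff₀ hipos] at h2
        calc c * i ≤ ∑ j ∈ Finset.range i, Y j ω := h2
          _ ≤ ∑ j ∈ Finset.range i, E j ω :=
            Finset.sum_le_sum fun j _ => min_le_left _ _
      rw [← summable_nat_add_iff M]
      refine Summable.of_nonneg_of_le
        (fun i => by linarith [hF1 (t + ∑ j ∈ Finset.range (i + M), E j ω)]) ?_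
        ((summable_nat_add_iff M).2 hg)
      intro i
      have hkey := key (i + M) (Nat.le_add_left _ _)
      have := hmono (by push_cast at hkey ⊢; linarith :
        t + c * ((i + M : ℕ) : ℝ) ≤ t + ∑ j ∈ Finset.range (i + M), E j ω)
      linarith
    exact aux_prod hFt hxb (fun i => hF1 _) hsummable
  refine ⟨hae, ?_⟩
  set g : Ω → ℝ := fun ω => ∏' i : ℕ, F (t + ∑ j ∈ Finset.range i, E j ω) with hgdef
  have haesm : AEMeasurable g P := by
    refine aemeasurable_of_tendsto_metrizable_ae (Filter.atTop)
      (f := fun n ω => ∏ i ∈ Finset.range n, F (t + ∑ j ∈ Finset.range i, E j ω)) ?_ ?_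
    · intro n
      exact (Finset.measurable_prod _ fun i _ =>
        hFmeas.comp (measurable_const.add (hTmeas i))).aemeasurable
    · filter_upwards [hae] with ω hω
      exact hω.1.hasProd.tendsto_prod_nat
  have hInt : Integrable g P := by
    refine Integrable.mono' (integrable_const (1:ℝ)) haesm.aestronglyMeasurable ?_
    filter_upwards [hae] with ω hω
    rw [Real.norm_eq_abs, abs_le]
    exact ⟨by linarith [hω.2.1], hω.2.2⟩
  have h0g : 0 ≤ᵐ[P] g := hae.mono fun ω h => h.2.1.le
  rw [show (∫ ω, (∏' i : ℕ, F (t + ∑ j ∈ Finset.range i, E j ω)) ∂P) = ∫ ω, g ω ∂P from rfl,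
    integral_pos_iff_support_of_nonneg_ae h0g hInt]
  have hsub : ∀ᵐ ω ∂P, ω ∈ Function.support g := hae.mono fun ω h => ne_of_gt h.2.1
  have hcnull : P (Function.support g)ᶜ = 0 := by
    have := ae_iff.1 hsub
    simpa [Set.compl_def] using this
  have hone : (1:ENNReal) ≤ P (Function.support g) := by
    have hle := measure_union_le (μ := P) (Function.support g) (Function.support g)ᶜ
    rwa [Set.union_compl_self, measure_univ, hcnull, add_zero] at hle
  exact lt_of_lt_of_le (by norm_num) hone
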